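/- Let a : ℕ → ℝ be a summable sequence and let A(n) := ∑_{k=0}^n a(k) denote its partial sums. Then the following are equivalent: (i) A(n) ≥ 0 for all n ≥ 0; (ii) for every sequence b : ℕ → ℝ that is antitone (monotonically non-increasing) and tends to 0 at infinity, if the sequence n ↦ a(n)·b(n) is summable then ∑'_{n} a(n)·b(n) ≥ 0. -/
import Mathlib


theorem restart_lemma (a : ℕ → ℝ) (ha : Summable a)
    (A : ℕ → ℝ) (hA : ∀ n, A n = ∑ k ∈ Finset.range (n + 1), a k) :
    (∀ n, 0 ≤ A n) ↔
      (∀ b : ℕ → ℝ, Antitone b → Filter.Tendsto b Filter.atTop (nhds 0) →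
        Summable (fun n => a n * b n) → 0 ≤ ∑' n, a n * b n) := by
  constructor
  · intro hpos b hb hb0 hsum
    have hbnn : ∀ n, 0 ≤ b n := fun n => hb.le_of_tendsto hb0 n
    have hPnn : ∀ N, 0 ≤ ∑ k ∈ Finset.range N, a k := by
      intro N
      cases N with
      | zero => simp
      | succ n => rw [← hA n]; exact hpos n
    have key : ∀ N, (∑ k ∈ Finset.range N, a k) * b N ≤ ∑ k ∈ Finset.range N, a k * b k := by
      intro N
      induction N with
      | zero => simp
      | succ n ih =>
        rw [Finset.sum_range_succ, Finset.sum_range_succ]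
        calc (∑ k ∈ Finset.range n, a k + a n) * b (n + 1)
            ≤ (∑ k ∈ Finset.range n, a k + a n) * b n := by
              apply mul_le_mul_of_nonneg_left (hb (Nat.le_succ n))
              have := hPnn (n + 1); rwa [Finset.sum_range_succ] at this
          _ = (∑ k ∈ Finset.range n, a k) * b n + a n * b n := by ring
          _ ≤ (∑ k ∈ Finset.range n, a k * b k) + a n * b n := by linarith
    have hnn : ∀ N, 0 ≤ ∑ k ∈ Finset.range N, a k * b k := fun N =>
      le_trans (mul_nonneg (hPnn N) (hbnn N)) (key N)
    exact ge_of_tendsto' hsum.hasSum.tendsto_sum_nat hnn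
  · intro h n
    set b : ℕ → ℝ := fun k => if k ≤ n then 1 else 0 with hbdef
    have hb : Antitone b := by
      intro i j hij
      simp only [hbdef]
      by_cases hj : j ≤ n
      · simp [hj, le_trans hij hj]
      · simp only [if_neg hj]
        split <;> norm_num
    have hb0 : Filter.Tendsto b Filter.atTop (nhds 0) := by
      apply Filter.Tendsto.congr' _ tendsto_const_nhds
      filter_upwards [Filter.eventually_gt_atTop n] with k hk
      simp [hbdef, Nat.not_le.mpr hk]
    have heq : ∀ k, a k * b k = if k ∈ Finset.range (n + 1) then a k else 0 := by
      intro k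
      simp only [hbdef, Finset.mem_range, Nat.lt_succ_iff]
      split <;> simp_all
    have hsum : Summable (fun k => a k * b k) := by
      apply summable_of_ne_finset_zero (s := Finset.range (n + 1))
      intro k hk
      rw [heq k, if_neg hk]
    have := h b hb hb0 hsum
    rw [tsum_eq_sum (s := Finset.range (n + 1)) (fun k hk => by rw [heq k, if_neg hk])] at this
    rw [hA]
    calc (0:ℝ) ≤ ∑ k ∈ Finset.range (n + 1), a k * b k := this
      _ = ∑ k ∈ Finset.range (n + 1), a k := by
          apply Finset.sum_congr rfl
          intro k hk
          rw [heq k, if_pos hk]
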